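/- Let N ≥ 2, 0 < k < N, and 1 ≤ j. The number of paths w : Fin N → Bool with w(0) = true, w(N−1) = false, exactly k visits to S1, and exactly j descents equals C(k−1, j−1)·C(N−k−1, j−1). (Such a path consists of j maximal blocks of trues and j maximal blocks of falses; distributing k trues over j nonempty blocks and N−k falses over j nonempty blocks gives the two weak-composition counts.) -/

import Mathlib

open Finset

/-- Transition probability of the two-state chain: `false` is S0, `true` is S1. -/
def mcStep (p00 p01 p10 p11 : ℝ) : Bool → Bool → ℝ
  | false, false => p00
  | false, true  => p01
  | true,  false => p10
  | true,  true  => p11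

/-- Weight of a path `w : Fin N → Bool`: product over `i = 0, …, N-2` of the
transition probability from `w i` to `w (i+1)`; equals `1` when `N = 1`. -/
def pathWeight (p00 p01 p10 p11 : ℝ) {N : ℕ} (w : Fin N → Bool) : ℝ :=
  ∏ i : Fin (N - 1),
    mcStep p00 p01 p10 p11
      (w ⟨i.val, by have := i.isLt; omega⟩)
      (w ⟨i.val + 1, by have := i.isLt; omega⟩)

/-- Number of visits to S1 (i.e. `true`) of a path. -/
def visitsS1 {N : ℕ} (w : Fin N → Bool) : ℕ :=
  (Finset.univ.filter fun i : Fin N => w i = true).card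

/-- Number of descents (indices `i ≤ N-2` with `w i = true` and `w (i+1) = false`). -/
def descents {N : ℕ} (w : Fin N → Bool) : ℕ :=
  (Finset.univ.filter fun i : Fin (N - 1) =>
    w ⟨i.val, by have := i.isLt; omega⟩ = true ∧
    w ⟨i.val + 1, by have := i.isLt; omega⟩ = false).card

/-- Number of ascents (indices `i ≤ N-2` with `w i = false` and `w (i+1) = true`). -/
def ascents {N : ℕ} (w : Fin N → Bool) : ℕ :=
  (Finset.univ.filter fun i : Fin (N - 1) =>
    w ⟨i.val, by have := i.isLt; omega⟩ = false ∧
    w ⟨i.val + 1, by have := i.isLt; omega⟩ = true).card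

def cnt (M : ℕ) (b : Bool) (k j : ℕ) : ℕ :=
  (univ.filter fun w : Fin (M+1) → Bool =>
    w 0 = true ∧ w (Fin.last M) = b ∧ visitsS1 w = k ∧ descents w = j).card

lemma card_filter_succ (M : ℕ) (P : (Fin (M+2) → Bool) → Prop) [DecidablePred P] :
    (univ.filter P).card =
      ∑ v : Fin (M+1) → Bool,
        ((if P (Fin.snoc v true) then 1 else 0) + (if P (Fin.snoc v false) then 1 else 0)) := by
  rw [Finset.card_filter]
  rw [← Fintype.sum_equiv (Fin.snocEquiv (fun _ => Bool))
      (fun p => if P (Fin.snoc p.2 p.1) then 1 else 0) (fun w => if P w then 1 else 0)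
      (fun p => rfl)]
  rw [Fintype.sum_prod_type_right]
  apply Finset.sum_congr rfl
  intro v _
  exact Fintype.sum_bool _

lemma visits_eq_sum {N : ℕ} (w : Fin N → Bool) :
    visitsS1 w = ∑ i, if w i = true then 1 else 0 := Finset.card_filter _ _

lemma visits_snoc {M : ℕ} (v : Fin M → Bool) (b : Bool) :
    visitsS1 (Fin.snoc v b) = visitsS1 v + (if b = true then 1 else 0) := by
  rw [visits_eq_sum, visits_eq_sum, Fin.sum_univ_castSucc]
  simp [Fin.snoc_castSucc, Fin.snoc_last]

lemma descents_eq {n : ℕ} (w : Fin (n+1) → Bool) :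
    descents w = (univ.filter fun i : Fin n => w i.castSucc = true ∧ w i.succ = false).card := rfl

lemma descents_sum {n : ℕ} (w : Fin (n+1) → Bool) :
    descents w = ∑ i : Fin n, if (w i.castSucc = true ∧ w i.succ = false) then 1 else 0 := by
  rw [descents_eq]; exact Finset.card_filter _ _

lemma descents_snoc {M : ℕ} (v : Fin (M+1) → Bool) (b : Bool) :
    descents (Fin.snoc v b : Fin (M+2) → Bool) =
      descents v + (if (v (Fin.last M) = true ∧ b = false) then 1 else 0) := by
  rw [descents_sum, descents_sum, Fin.sum_univ_castSucc]
  congr 1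
  · apply Finset.sum_congr rfl
    intro i _
    rw [Fin.succ_castSucc]
    simp only [Fin.snoc_castSucc]
  · rw [Fin.succ_last]
    simp [Fin.snoc_castSucc, Fin.snoc_last]

lemma snoc_zero' {M : ℕ} (v : Fin (M+1) → Bool) (b : Bool) :
    (Fin.snoc v b : Fin (M+2) → Bool) 0 = v 0 := by
  rw [← Fin.castSucc_zero, Fin.snoc_castSucc]

lemma cntF_succ (M k j : ℕ) :
    cnt (M+1) false k (j+1) = cnt M false k (j+1) + cnt M true k j := by
  rw [cnt, card_filter_succ]
  simp only [snoc_zero', Fin.snoc_last, visits_snoc, descents_snoc]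
  rw [cnt, cnt, Finset.card_filter, Finset.card_filter, ← Finset.sum_add_distrib]
  apply Finset.sum_congr rfl
  intro v _
  by_cases hl : v (Fin.last M) = true <;> simp [hl] <;> split_ifs <;> omega

lemma cntF_succ0 (M k : ℕ) :
    cnt (M+1) false k 0 = cnt M false k 0 := by
  rw [cnt, card_filter_succ]
  simp only [snoc_zero', Fin.snoc_last, visits_snoc, descents_snoc]
  rw [cnt, Finset.card_filter]
  apply Finset.sum_congr rfl
  intro v _
  by_cases hl : v (Fin.last M) = true <;> simp [hl] <;> split_ifs <;> omega

lemma cntT_succ (M k j : ℕ) :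
    cnt (M+1) true (k+1) j = cnt M false k j + cnt M true k j := by
  rw [cnt, card_filter_succ]
  simp only [snoc_zero', Fin.snoc_last, visits_snoc, descents_snoc]
  rw [cnt, cnt, Finset.card_filter, Finset.card_filter, ← Finset.sum_add_distrib]
  apply Finset.sum_congr rfl
  intro v _
  by_cases hl : v (Fin.last M) = true <;> simp [hl] <;> split_ifs <;> omega

lemma cntT_succ0 (M j : ℕ) :
    cnt (M+1) true 0 j = 0 := by
  rw [cnt, card_filter_succ]
  simp only [snoc_zero', Fin.snoc_last, visits_snoc, descents_snoc]
  apply Finset.sum_eq_zero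
  intro v _
  by_cases hl : v (Fin.last M) = true <;> simp [hl] <;> split_ifs <;> omega

lemma descents_fin1 (w : Fin 1 → Bool) : descents w = 0 := by
  rw [descents_eq]; simp

lemma visits_fin1 (w : Fin 1 → Bool) : visitsS1 w = if w 0 = true then 1 else 0 := by
  rw [visits_eq_sum, Fin.sum_univ_one]

lemma cnt_zero (M : ℕ) (b : Bool) (j : ℕ) : cnt M b 0 j = 0 := by
  rw [cnt, Finset.card_eq_zero, Finset.filter_eq_empty_iff]
  intro w _
  rintro ⟨h0, -, hv, -⟩
  have h : (0 : Fin (M+1)) ∈ Finset.univ.filter (fun i => w i = true) := by simp [h0]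
  rw [visitsS1, Finset.card_eq_zero] at hv
  rw [hv] at h
  exact absurd h (Finset.notMem_empty _)

lemma cnt0_false (k j : ℕ) : cnt 0 false k j = 0 := by
  rw [cnt, Finset.card_eq_zero, Finset.filter_eq_empty_iff]
  intro w _
  rintro ⟨h0, h1, -, -⟩
  rw [show (Fin.last 0) = 0 from rfl, h0] at h1
  exact Bool.noConfusion h1

lemma cnt0_true (k j : ℕ) : cnt 0 true k j = if k = 1 ∧ j = 0 then 1 else 0 := by
  rw [cnt, Finset.card_filter]
  rw [← Fintype.sum_equiv (Equiv.funUnique (Fin 1) Bool).symm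
      (fun b => if ((fun _ => b : Fin 1 → Bool) 0 = true ∧ (fun _ => b : Fin 1 → Bool) (Fin.last 0) = true ∧
        visitsS1 (fun _ => b : Fin 1 → Bool) = k ∧ descents (fun _ => b : Fin 1 → Bool) = j) then 1 else 0)
      _ (fun b => rfl)]
  rw [Fintype.sum_bool]
  simp [visits_fin1, descents_fin1]
  split_ifs <;> omega

lemma key (M : ℕ) :
    (∀ k, cnt M false k 0 = 0) ∧
    (∀ k j, cnt M false (k+1) (j+1) =
      if k+1 < M+1 then k.choose j * (M-k-1).choose j else 0) ∧
    (∀ k, cnt M true k 0 = if k = M+1 then 1 else 0) ∧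
    (∀ k j, cnt M true (k+1) (j+1) =
      if k+1 < M+1 then k.choose (j+1) * (M-k-1).choose j else 0) := by
  induction M with
  | zero =>
    refine ⟨fun k => cnt0_false k 0, fun k j => ?_, fun k => ?_, fun k j => ?_⟩
    · rw [cnt0_false, if_neg (by omega)]
    · rw [cnt0_true]; split_ifs <;> omega
    · rw [cnt0_true, if_neg (by omega), if_neg (by omega)]
  | succ M ih =>
    obtain ⟨ihB, ihC, ihD, ihE⟩ := ih
    have hB : ∀ k, cnt (M+1) false k 0 = 0 := by
      intro k; rw [cntF_succ0]; exact ihB k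
    refine ⟨hB, fun k j => ?_, fun k => ?_, fun k j => ?_⟩
    · -- C
      rw [cntF_succ, ihC]
      cases j with
      | zero =>
        rw [ihD]
        rcases lt_trichotomy (k+1) (M+1) with h | h | h
        · rw [if_pos h, if_neg (show ¬(k+1 = M+1) by omega), if_pos (show k+1 < M+1+1 by omega)]
          simp
        · rw [if_neg (by omega), if_pos h, if_pos (show k+1 < M+1+1 by omega)]
          rw [show M+1-k-1 = 0 by omega]
          simp
        · rw [if_neg (by omega), if_neg (by omega), if_neg (by omega)]
      | succ j' =>
        rw [ihE]
        rcases lt_trichotomy (k+1) (M+1) with h | h | h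
        · rw [if_pos h, if_pos h, if_pos (show k+1 < M+1+1 by omega)]
          rw [show M+1-k-1 = (M-k-1) + 1 by omega, Nat.choose_succ_succ']
          ring
        · rw [if_neg (by omega), if_neg (by omega), if_pos (show k+1 < M+1+1 by omega)]
          rw [show M+1-k-1 = 0 by omega,
            Nat.choose_eq_zero_of_lt (Nat.succ_pos j'), Nat.mul_zero]
        · rw [if_neg (by omega), if_neg (by omega), if_neg (by omega)]
    · -- D
      cases k with
      | zero => rw [cntT_succ0]; rw [if_neg (by omega)]
      | succ k' =>
        rw [cntT_succ, ihB, ihD]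
        split_ifs <;> omega
    · -- E
      rw [cntT_succ]
      cases k with
      | zero =>
        rw [cnt_zero, cnt_zero]
        rw [if_pos (show 0+1 < M+1+1 by omega)]
        rw [Nat.choose_eq_zero_of_lt (Nat.succ_pos j), Nat.zero_mul]
      | succ k' =>
        rw [ihC, ihE]
        rcases lt_trichotomy (k'+1) (M+1) with h | h | h
        · rw [if_pos h, if_pos h, if_pos (by omega)]
          rw [show M + 1 - (k'+1) - 1 = M - k' - 1 by omega]
          rw [← Nat.add_mul, ← Nat.choose_succ_succ']
        · rw [if_neg (by omega), if_neg (by omega), if_neg (by omega)]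
        · rw [if_neg (by omega), if_neg (by omega), if_neg (by omega)]

theorem stmt8 (N k j : ℕ) (hN : 2 ≤ N) (hk0 : 0 < k) (hkN : k < N) (hj : 1 ≤ j) :
    (Finset.univ.filter (fun w : Fin N → Bool =>
        w ⟨0, by omega⟩ = true ∧ w ⟨N - 1, by omega⟩ = false ∧
        visitsS1 w = k ∧ descents w = j)).card =
    Nat.choose (k - 1) (j - 1) * Nat.choose (N - k - 1) (j - 1) := by
  obtain ⟨M, rfl⟩ : ∃ M, N = M + 1 := ⟨N-1, by omega⟩
  obtain ⟨k', rfl⟩ : ∃ k'', k = k'' + 1 := ⟨k-1, by omega⟩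
  obtain ⟨j', rfl⟩ : ∃ j'', j = j'' + 1 := ⟨j-1, by omega⟩
  have hcard : (Finset.univ.filter (fun w : Fin (M+1) → Bool =>
        w ⟨0, by omega⟩ = true ∧ w ⟨M + 1 - 1, by omega⟩ = false ∧
        visitsS1 w = k' + 1 ∧ descents w = j' + 1)).card = cnt M false (k'+1) (j'+1) := by
    rw [cnt]
    congr 1
  have h1 := (key M).2.1 k' j'
  rw [if_pos hkN] at h1
  rw [hcard, h1]
  simp [Nat.succ_sub_succ]
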